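/- Let A be an r×n integer matrix (n ≥ 2) with columns C₁,…,Cₙ, and define A₁ = (C₁, C₁+C₂, C₃,…,Cₙ), A₂ = (C₁+C₂, C₂, C₃,…,Cₙ), A₃ = (C₁+C₂, C₃,…,Cₙ). Let E(x₁,…,xₙ) = Σ_{α∈ℕⁿ, Aα=0} x^α and let E₁, E₂ (in n variables) and E₃ (in n−1 variables) be the analogous generating functions over nonnegative integer solutions of A₁, A₂, A₃ respectively. Then, as formal power series: E(x₁,x₂,x₃,…,xₙ) = E₁(x₁, x₁x₂, x₃,…,xₙ) + E₂(x₁x₂, x₂, x₃,…,xₙ) − E₃(x₁x₂, x₃,…,xₙ). -/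

import Mathlib

/-- **Key induction equation (e-3-Ex123).**  Let `A` be an `r × n` integer matrix (`n ≥ 2`,
here `n + 2` columns `C₀, C₁, …`), and let `A₁ = (C₀, C₀+C₁, C₂, …)`,
`A₂ = (C₀+C₁, C₁, C₂, …)`, `A₃ = (C₀+C₁, C₂, …)`.  Let `E, E₁, E₂, E₃` be the generating
functions over nonnegative integer solutions of `A, A₁, A₂, A₃` respectively, and let
`S₁ = E₁(x₀, x₀x₁, x₂, …)`, `S₂ = E₂(x₀x₁, x₁, x₂, …)`, `S₃ = E₃(x₀x₁, x₂, …)` denote the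
substituted series (described coefficientwise).  Then, as formal power series,
`E = S₁ + S₂ − S₃`. -/
theorem elliott_reduction_generating_function_identity
    (r n : ℕ) (A : Matrix (Fin r) (Fin (n + 2)) ℤ)
    (A₁ A₂ : Matrix (Fin r) (Fin (n + 2)) ℤ) (A₃ : Matrix (Fin r) (Fin (n + 1)) ℤ)
    (hA₁ : A₁ = Matrix.of fun i j => if j = 1 then A i 0 + A i 1 else A i j)
    (hA₂ : A₂ = Matrix.of fun i j => if j = 0 then A i 0 + A i 1 else A i j)
    (hA₃ : A₃ = Matrix.of fun i (j : Fin (n + 1)) =>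
      if j = 0 then A i 0 + A i 1 else A i j.succ)
    (E E₁ E₂ S₁ S₂ S₃ : MvPowerSeries (Fin (n + 2)) ℂ)
    (E₃ : MvPowerSeries (Fin (n + 1)) ℂ)
    (hE : ∀ d : Fin (n + 2) →₀ ℕ, MvPowerSeries.coeff d E =
      if A.mulVec (fun i => (d i : ℤ)) = 0 then 1 else 0)
    (hE₁ : ∀ d : Fin (n + 2) →₀ ℕ, MvPowerSeries.coeff d E₁ =
      if A₁.mulVec (fun i => (d i : ℤ)) = 0 then 1 else 0)
    (hE₂ : ∀ d : Fin (n + 2) →₀ ℕ, MvPowerSeries.coeff d E₂ =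
      if A₂.mulVec (fun i => (d i : ℤ)) = 0 then 1 else 0)
    (hE₃ : ∀ d : Fin (n + 1) →₀ ℕ, MvPowerSeries.coeff d E₃ =
      if A₃.mulVec (fun i => (d i : ℤ)) = 0 then 1 else 0)
    -- `S₁ = E₁(x₀, x₀x₁, x₂, …)` : the monomial `y^α` contributes to `x`-degree
    -- `(α₀+α₁, α₁, α₂, …)`.
    (hS₁ : ∀ d : Fin (n + 2) →₀ ℕ, MvPowerSeries.coeff d S₁ =
      if d 1 ≤ d 0 then
        MvPowerSeries.coeff
          (Finsupp.equivFunOnFinite.symm fun j => if j = 0 then d 0 - d 1 else d j) E₁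
      else 0)
    -- `S₂ = E₂(x₀x₁, x₁, x₂, …)`
    (hS₂ : ∀ d : Fin (n + 2) →₀ ℕ, MvPowerSeries.coeff d S₂ =
      if d 0 ≤ d 1 then
        MvPowerSeries.coeff
          (Finsupp.equivFunOnFinite.symm fun j => if j = 1 then d 1 - d 0 else d j) E₂
      else 0)
    -- `S₃ = E₃(x₀x₁, x₂, …)`
    (hS₃ : ∀ d : Fin (n + 2) →₀ ℕ, MvPowerSeries.coeff d S₃ =
      if d 0 = d 1 then
        MvPowerSeries.coeff
          (Finsupp.equivFunOnFinite.symm fun k : Fin (n + 1) =>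
            if k = 0 then d 0 else d k.succ) E₃
      else 0) :
    E = S₁ + S₂ - S₃ :=  by
  subst hA₁ hA₂ hA₃
  apply MvPowerSeries.ext
  intro d
  rw [map_sub, map_add, hE d, hS₁ d, hS₂ d, hS₃ d, hE₁, hE₂, hE₃]
  have hne : ∀ j : Fin n, (j.succ.succ : Fin (n+2)) ≠ 0 ∧ (j.succ.succ : Fin (n+2)) ≠ 1 := by
    intro j
    refine ⟨Fin.succ_ne_zero _, fun hc => Fin.succ_ne_zero j (Fin.succ_injective _ hc)⟩
  have e01 : ((0 : Fin (n+2)) = 1) = False := by simp [Fin.ext_iff]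
  have e10 : ((1 : Fin (n+2)) = 0) = False := by simp [Fin.ext_iff]
  have h1 : d 1 ≤ d 0 →
      ((Matrix.of fun i j => if j = 1 then A i 0 + A i 1 else A i j).mulVec
        (fun i => (((Finsupp.equivFunOnFinite.symm fun j => if j = 0 then d 0 - d 1 else d j)) i : ℤ))
        = A.mulVec fun i => (d i : ℤ)) := by
    intro h
    have hsub : ((d 0 - d 1 : ℕ) : ℤ) = (d 0 : ℤ) - d 1 := by
      exact_mod_cast Int.ofNat_sub h
    funext i
    simp only [Matrix.mulVec, dotProduct, Matrix.of_apply,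
      Finsupp.coe_equivFunOnFinite_symm, Fin.sum_univ_succ, Fin.isValue,
      Fin.succ_zero_eq_one, e01, e10, if_true, if_false, ite_true, ite_false,
      fun j => (hne j).1, fun j => (hne j).2, hsub]
    ring
  have h2 : d 0 ≤ d 1 →
      ((Matrix.of fun i j => if j = 0 then A i 0 + A i 1 else A i j).mulVec
        (fun i => (((Finsupp.equivFunOnFinite.symm fun j => if j = 1 then d 1 - d 0 else d j)) i : ℤ))
        = A.mulVec fun i => (d i : ℤ)) := by
    intro h
    have hsub : ((d 1 - d 0 : ℕ) : ℤ) = (d 1 : ℤ) - d 0 := by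
      exact_mod_cast Int.ofNat_sub h
    funext i
    simp only [Matrix.mulVec, dotProduct, Matrix.of_apply,
      Finsupp.coe_equivFunOnFinite_symm, Fin.sum_univ_succ, Fin.isValue,
      Fin.succ_zero_eq_one, e01, e10, if_true, if_false, ite_true, ite_false,
      fun j => (hne j).1, fun j => (hne j).2, hsub]
    ring
  have h3 : d 0 = d 1 →
      ((Matrix.of fun i (j : Fin (n+1)) => if j = 0 then A i 0 + A i 1 else A i j.succ).mulVec
        (fun i => (((Finsupp.equivFunOnFinite.symm fun k : Fin (n+1) =>
          if k = 0 then d 0 else d k.succ)) i : ℤ))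
        = A.mulVec fun i => (d i : ℤ)) := by
    intro h
    funext i
    simp only [Matrix.mulVec, dotProduct, Matrix.of_apply,
      Finsupp.coe_equivFunOnFinite_symm, Fin.sum_univ_succ, Fin.isValue,
      Fin.succ_zero_eq_one, if_true, ite_true,
      fun j : Fin n => (Fin.succ_ne_zero j : (j.succ : Fin (n+1)) ≠ 0), if_false, ite_false]
    rw [← h]
    ring
  rcases lt_trichotomy (d 0) (d 1) with hlt | heq | hgt
  · rw [if_neg (not_le.mpr hlt), if_pos hlt.le, if_neg hlt.ne, h2 hlt.le]
    ring
  · rw [if_pos heq.ge, if_pos heq.le, if_pos heq, h1 heq.ge, h2 heq.le, h3 heq]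
    ring
  · rw [if_pos hgt.le, if_neg (not_le.mpr hgt), if_neg hgt.ne', h1 hgt.le]
    ring
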